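/- Suppose in addition that p is continuous with compact support, Q : E → ℝ is differentiable, λ > 0, and Z_k > 0 is a constant, and define the guided smoothed policy density π_k(x) = p_k(x) * Real.exp (Q x / λ) / Z_k. Then for every x ∈ E, gradient (fun y => Real.log (π_k y)) x = −(1/k^2) • (x − m x) + (1/λ) • gradient Q x, where m x = (p_k x)⁻¹ • ∫ (p a * φ_k (x − a)) • a ∂a is the posterior mean (this is the guided score identity of Eqs. (25)–(26): ∇ log π^k(a^k) = −E[(a^k − a)/k² | a^k] + (1/λ) ∇ Q(s, a^k)). -/

import Mathlib

open MeasureTheory InnerProductSpace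

set_option maxHeartbeats 1000000
set_option synthInstance.maxHeartbeats 400000

lemma aux_texp_le (k t : ℝ) (hk : 0 < k) :
    t * Real.exp (-(2 * k ^ 2)⁻¹ * t ^ 2) ≤ k := by
  have hE : 0 < Real.exp ((2 * k ^ 2)⁻¹ * t ^ 2) := Real.exp_pos _
  have h1 : (2 * k ^ 2)⁻¹ * t ^ 2 + 1 ≤ Real.exp ((2 * k ^ 2)⁻¹ * t ^ 2) :=
    Real.add_one_le_exp _
  have h2 : Real.exp (-(2 * k ^ 2)⁻¹ * t ^ 2) = (Real.exp ((2 * k ^ 2)⁻¹ * t ^ 2))⁻¹ := by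
    rw [← Real.exp_neg]; ring_nf
  rw [h2, ← div_eq_mul_inv, div_le_iff₀ hE]
  have key : t ≤ k * ((2 * k ^ 2)⁻¹ * t ^ 2) + k := by
    rw [show k * ((2 * k ^ 2)⁻¹ * t ^ 2) = t ^ 2 / (2 * k) from by field_simp]
    rw [div_add' _ _ _ (by positivity), le_div_iff₀ (by positivity)]
    nlinarith [sq_nonneg (t - k)]
  nlinarith [mul_le_mul_of_nonneg_left h1 hk.le, key]

lemma phi_hasFDerivAt (n : ℕ) (k c : ℝ) (hk : 0 < k) (y : EuclideanSpace ℝ (Fin n)) :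
    HasFDerivAt (fun y : EuclideanSpace ℝ (Fin n) => c * Real.exp (-(2 * k ^ 2)⁻¹ * ‖y‖ ^ 2))
      (toDual ℝ (EuclideanSpace ℝ (Fin n))
        ((-(c * Real.exp (-(2 * k ^ 2)⁻¹ * ‖y‖ ^ 2) / k ^ 2)) • y)) y := by
  have h1 : HasFDerivAt (fun y : EuclideanSpace ℝ (Fin n) => ‖y‖ ^ 2) (2 • innerSL ℝ y) y :=
    (hasStrictFDerivAt_norm_sq y).hasFDerivAt
  have h2 := ((h1.const_mul (-(2 * k ^ 2)⁻¹)).exp).const_mul c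
  refine h2.congr_fderiv ?_
  ext v
  simp only [toDual_apply_apply, ContinuousLinearMap.smul_apply, ContinuousLinearMap.coe_smul',
    Pi.smul_apply, innerSL_apply_apply, smul_eq_mul, real_inner_smul_left]
  have hk2 : (k : ℝ) ^ 2 ≠ 0 := by positivity
  field_simp
  ring


/-- Guided score identity for the smoothed policy (Eqs. (25)–(26)): for the guided smoothed
policy density `π_k(x) = p_k(x) * exp (Q x / λ) / Z_k`, where `p` is a continuous compactly
supported probability density and `p_k` its Gaussian smoothing, the score satisfies
`∇ log π^k(a^k) = −E[(a^k − a)/k² | a^k] + (1/λ) ∇ Q(s, a^k)`, i.e.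
`∇ log π_k x = −(1/k²) • (x − m x) + (1/λ) • ∇ Q x` with posterior mean
`m x = (p_k x)⁻¹ • ∫ (p a * φ_k (x − a)) • a ∂a`. -/
theorem gradient_log_guided_smoothed_policy
    (n : ℕ) (hn : 0 < n) (k : ℝ) (hk : 0 < k)
    (φ : EuclideanSpace ℝ (Fin n) → ℝ)
    (hφ : ∀ x, φ x = (2 * Real.pi * k ^ 2) ^ (-(n : ℝ) / 2) *
        Real.exp (-‖x‖ ^ 2 / (2 * k ^ 2)))
    (p : EuclideanSpace ℝ (Fin n) → ℝ)
    (hpmeas : Measurable p) (hpnonneg : ∀ a, 0 ≤ p a) (hpint : ∫ a, p a = 1)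
    (hpcont : Continuous p) (hpsupp : HasCompactSupport p)
    (pk : EuclideanSpace ℝ (Fin n) → ℝ)
    (hpk : ∀ x, pk x = ∫ a, p a * φ (x - a))
    (Q : EuclideanSpace ℝ (Fin n) → ℝ) (hQdiff : Differentiable ℝ Q)
    (lam Zk : ℝ) (hlam : 0 < lam) (hZk : 0 < Zk)
    (πk : EuclideanSpace ℝ (Fin n) → ℝ)
    (hπk : ∀ x, πk x = pk x * Real.exp (Q x / lam) / Zk)
    (m : EuclideanSpace ℝ (Fin n) → EuclideanSpace ℝ (Fin n))
    (hm : ∀ x, m x = (pk x)⁻¹ • ∫ a, (p a * φ (x - a)) • a) :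
    ∀ x : EuclideanSpace ℝ (Fin n),
      gradient (fun y => Real.log (πk y)) x
        = -(1 / k ^ 2) • (x - m x) + (1 / lam) • gradient Q x := by
  intro x
  set c := (2 * Real.pi * k ^ 2) ^ (-(n : ℝ) / 2) with hcdef
  have hc : 0 < c := Real.rpow_pos_of_pos (by positivity) _
  have hφ' : φ = fun y => c * Real.exp (-(2 * k ^ 2)⁻¹ * ‖y‖ ^ 2) := by
    funext y
    rw [hφ y, show -‖y‖ ^ 2 / (2 * k ^ 2) = -(2 * k ^ 2)⁻¹ * ‖y‖ ^ 2 from by ring]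
  have hφpos : ∀ y, 0 < φ y := by
    intro y; rw [hφ']; positivity
  have hφcont : Continuous φ := by
    rw [hφ']
    exact continuous_const.mul ((continuous_const.mul (continuous_norm.pow 2)).rexp)
  have hD : ∀ y, HasFDerivAt φ
      (toDual ℝ (EuclideanSpace ℝ (Fin n)) ((-(φ y / k ^ 2)) • y)) y := by
    intro y
    simp only [hφ']
    exact phi_hasFDerivAt n k c hk y
  have hDcont : Continuous fun y : EuclideanSpace ℝ (Fin n) =>
      toDual ℝ (EuclideanSpace ℝ (Fin n)) ((-(φ y / k ^ 2)) • y) :=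
    (toDual ℝ (EuclideanSpace ℝ (Fin n))).continuous.comp
      (((hφcont.div_const _).neg).smul continuous_id)
  have hDnorm : ∀ y, ‖toDual ℝ (EuclideanSpace ℝ (Fin n)) ((-(φ y / k ^ 2)) • y)‖ ≤ c / k := by
    intro y
    rw [LinearIsometryEquiv.norm_map, norm_smul, Real.norm_eq_abs, abs_neg,
      abs_of_nonneg (div_nonneg (hφpos y).le (sq_nonneg k))]
    have h := aux_texp_le k ‖y‖ hk
    have hφy : φ y = c * Real.exp (-(2 * k ^ 2)⁻¹ * ‖y‖ ^ 2) := by rw [hφ']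
    calc φ y / k ^ 2 * ‖y‖ = (c / k ^ 2) * (‖y‖ * Real.exp (-(2 * k ^ 2)⁻¹ * ‖y‖ ^ 2)) := by
          rw [hφy]; ring
      _ ≤ (c / k ^ 2) * k := by
          exact mul_le_mul_of_nonneg_left h (by positivity)
      _ = c / k := by field_simp
  -- integrability facts
  have hcs : ∀ x', HasCompactSupport fun a => p a * φ (x' - a) := fun x' => hpsupp.mul_right
  have hcont1 : ∀ x', Continuous fun a : EuclideanSpace ℝ (Fin n) => p a * φ (x' - a) :=
    fun x' => hpcont.mul (hφcont.comp (continuous_const.sub continuous_id))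
  have hint1 : ∀ x', Integrable fun a => p a * φ (x' - a) :=
    fun x' => (hcont1 x').integrable_of_hasCompactSupport (hcs x')
  have hintI : Integrable fun a => (p a * φ (x - a)) • a :=
    (((hcont1 x).smul continuous_id)).integrable_of_hasCompactSupport ((hcs x).smul_right)
  have hintX : Integrable fun a => (p a * φ (x - a)) • x :=
    (((hcont1 x).smul continuous_const)).integrable_of_hasCompactSupport ((hcs x).smul_right)
  have hintD : Integrable fun a => p a •
      toDual ℝ (EuclideanSpace ℝ (Fin n)) ((-(φ (x - a) / k ^ 2)) • (x - a)) :=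
    ((hpcont.smul (hDcont.comp (continuous_const.sub continuous_id))).integrable_of_hasCompactSupport
      hpsupp.smul_right)
  have hintg : Integrable fun a => p a • ((-(φ (x - a) / k ^ 2)) • (x - a)) :=
    ((hpcont.smul ((((hφcont.comp (continuous_const.sub continuous_id)).div_const _).neg).smul
      (continuous_const.sub continuous_id))).integrable_of_hasCompactSupport hpsupp.smul_right)
  -- positivity of pk
  have hpkpos : ∀ x', 0 < pk x' := by
    intro x'
    obtain ⟨a₀, ha₀⟩ : ∃ a, p a ≠ 0 := by
      by_contra h; push_neg at h
      simp [h] at hpint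
    rw [hpk x']
    exact Continuous.integral_pos_of_hasCompactSupport_nonneg_nonzero (hcont1 x') (hcs x')
      (fun a => mul_nonneg (hpnonneg a) (hφpos _).le)
      (mul_ne_zero ha₀ (hφpos _).ne')
  -- derivative of pk
  have hpk' : HasFDerivAt pk
      (∫ a, p a • toDual ℝ (EuclideanSpace ℝ (Fin n)) ((-(φ (x - a) / k ^ 2)) • (x - a))) x := by
    have heq : pk = fun x' => ∫ a, p a * φ (x' - a) := funext hpk
    rw [heq]
    refine hasFDerivAt_integral_of_dominated_of_fderiv_le (𝕜 := ℝ)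
      (F := fun x' a => p a * φ (x' - a))
      (F' := fun x' a => p a •
        toDual ℝ (EuclideanSpace ℝ (Fin n)) ((-(φ (x' - a) / k ^ 2)) • (x' - a)))
      (bound := fun a => p a * (c / k)) (Metric.ball_mem_nhds x one_pos)
      (Filter.Eventually.of_forall fun x' => (hcont1 x').aestronglyMeasurable)
      (hint1 x)
      ((hpcont.smul (hDcont.comp (continuous_const.sub continuous_id))).aestronglyMeasurable)
      (Filter.Eventually.of_forall ?_)
      ((hpcont.integrable_of_hasCompactSupport hpsupp).mul_const _)
      (Filter.Eventually.of_forall ?_)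
    · intro a x' _
      refine (norm_smul_le (p a) ((toDual ℝ (EuclideanSpace ℝ (Fin n))) (-(φ (x' - a) / k ^ 2) • (x' - a)))).trans ?_
      rw [Real.norm_eq_abs, abs_of_nonneg (hpnonneg a)]
      exact mul_le_mul_of_nonneg_left (hDnorm _) (hpnonneg a)
    · intro a x' _
      have h := (hD (x' - a)).comp x' ((hasFDerivAt_id x').sub_const a)
      simp only [ContinuousLinearMap.comp_id] at h
      exact h.const_mul (p a)
  -- identify the derivative with a gradient
  have hswap : (∫ a, p a • toDual ℝ (EuclideanSpace ℝ (Fin n)) ((-(φ (x - a) / k ^ 2)) • (x - a)))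
      = toDual ℝ (EuclideanSpace ℝ (Fin n))
        (∫ a, p a • ((-(φ (x - a) / k ^ 2)) • (x - a))) := by
    refine ContinuousLinearMap.ext fun v => ?_
    rw [ContinuousLinearMap.integral_apply hintD v]
    have h1 : ∀ a, (p a •
        toDual ℝ (EuclideanSpace ℝ (Fin n)) ((-(φ (x - a) / k ^ 2)) • (x - a))) v
        = inner ℝ v (p a • ((-(φ (x - a) / k ^ 2)) • (x - a))) := by
      intro a
      simp only [ContinuousLinearMap.smul_apply, toDual_apply_apply, smul_eq_mul]
      rw [real_inner_smul_right, real_inner_comm]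
    simp only [h1]
    rw [integral_inner hintg v, toDual_apply_apply, real_inner_comm]
  have hGsplit : (∫ a, p a • ((-(φ (x - a) / k ^ 2)) • (x - a)))
      = -(1 / k ^ 2) • ((pk x) • x - ∫ a, (p a * φ (x - a)) • a) := by
    have hterm : ∀ a, p a • ((-(φ (x - a) / k ^ 2)) • (x - a))
        = -(1 / k ^ 2) • ((p a * φ (x - a)) • x - (p a * φ (x - a)) • a) := by
      intro a
      rw [← smul_sub, smul_smul, smul_smul]
      congr 1
      ring
    calc (∫ a, p a • ((-(φ (x - a) / k ^ 2)) • (x - a)))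
        = ∫ a, -(1 / k ^ 2) • ((p a * φ (x - a)) • x - (p a * φ (x - a)) • a) := by
          simp only [hterm]
      _ = -(1 / k ^ 2) • ∫ a, ((p a * φ (x - a)) • x - (p a * φ (x - a)) • a) :=
          integral_smul _ _
      _ = -(1 / k ^ 2) • ((∫ a, (p a * φ (x - a)) • x) - ∫ a, (p a * φ (x - a)) • a) := by
          rw [integral_sub hintX hintI]
      _ = -(1 / k ^ 2) • ((pk x) • x - ∫ a, (p a * φ (x - a)) • a) := by
          rw [integral_smul_const, ← hpk x]
  have hgradpk : HasFDerivAt pk (toDual ℝ (EuclideanSpace ℝ (Fin n))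
      (-(1 / k ^ 2) • ((pk x) • x - ∫ a, (p a * φ (x - a)) • a))) x := by
    rw [← hGsplit, ← hswap]; exact hpk'
  -- the log of πk
  have hlogeq : (fun y => Real.log (πk y))
      = fun y => Real.log (pk y) + lam⁻¹ * Q y - Real.log Zk := by
    funext y
    rw [hπk y, Real.log_div (mul_ne_zero (hpkpos y).ne' (Real.exp_ne_zero _)) hZk.ne',
      Real.log_mul (hpkpos y).ne' (Real.exp_ne_zero _), Real.log_exp, div_eq_inv_mul]
  rw [hlogeq]
  have hfd : HasFDerivAt (fun y => Real.log (pk y) + lam⁻¹ * Q y - Real.log Zk)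
      (toDual ℝ (EuclideanSpace ℝ (Fin n))
        ((pk x)⁻¹ • (-(1 / k ^ 2) • ((pk x) • x - ∫ a, (p a * φ (x - a)) • a))
          + lam⁻¹ • gradient Q x)) x := by
    have h1 : HasFDerivAt (fun y => Real.log (pk y))
        ((pk x)⁻¹ • toDual ℝ (EuclideanSpace ℝ (Fin n))
          (-(1 / k ^ 2) • ((pk x) • x - ∫ a, (p a * φ (x - a)) • a))) x :=
      hgradpk.log (hpkpos x).ne'
    have hQg : HasFDerivAt Q (toDual ℝ (EuclideanSpace ℝ (Fin n)) (gradient Q x)) x :=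
      ((hQdiff x).hasGradientAt).hasFDerivAt
    have h2 : HasFDerivAt (fun y => lam⁻¹ * Q y)
        (lam⁻¹ • toDual ℝ (EuclideanSpace ℝ (Fin n)) (gradient Q x)) x :=
      hQg.const_mul lam⁻¹
    have h3 := (h1.add h2).sub_const (Real.log Zk)
    rw [map_add, map_smul _ (pk x)⁻¹, map_smul _ lam⁻¹]
    exact h3
  rw [(hasGradientAt_iff_hasFDerivAt.mpr hfd).gradient, hm x]
  congr 1
  · rw [smul_comm, smul_sub, smul_smul, inv_mul_cancel₀ (hpkpos x).ne', one_smul]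
  · rw [one_div]
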